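/- (Theorem 1, part (b).) Fix an integer n ≥ 1, σ > 0, α, τ ∈ (0,1) satisfying (C1) τ ≥ α and (C2) τ < 2Φ(−z_{α/2}/2) − α, and λ > 0 with z_{α/2}σ/√n < √λ < (z_{α/2} + z_{τ/2})σ/√n. Let c_1 > 0 be a solution of θ = √λ − z_{α/2}σ̃(θ)/√n and set ν_0 = √λ. Then for every θ ∈ [c_1, ν_0], the difference Δ(θ) = CR(θ) − CR_1(θ) satisfies Δ(θ) ≥ 2/(1 + α) − 2Φ(z_{α/2}/2), and this lower bound is strictly positive. -/

import Mathlib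

open MeasureTheory ProbabilityTheory

/-- The standard normal cumulative distribution function. -/
noncomputable def Phi (x : ℝ) : ℝ := (gaussianReal 0 1 (Set.Iic x)).toReal

/-- P_s(θ,ν) = Φ(√n(θ − ν)/σ) + Φ(√n(−θ − ν)/σ). -/
noncomputable def Ps (n : ℕ) (σ θ ν : ℝ) : ℝ :=
  Phi (Real.sqrt n * (θ - ν) / σ) + Phi (Real.sqrt n * (-θ - ν) / σ)

/-- σ̃(θ) = (1 + λ/θ²)⁻¹ σ for θ ≠ 0, with the convention σ̃(0) = 0. -/
noncomputable def sigTilde (lam σ θ : ℝ) : ℝ :=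
  if θ = 0 then 0 else (1 + lam / θ ^ 2)⁻¹ * σ

open Classical in
/-- The piecewise function CR_a(θ,ν); here `za` denotes the quantile z_{α/2}. -/
noncomputable def CRa (n : ℕ) (σ lam za θ ν : ℝ) : ℝ :=
  if θ < |ν - za * sigTilde lam σ θ / Real.sqrt n| then
    (Ps n σ θ ν - 2 * Phi (-(za * sigTilde lam σ θ / σ))) *
      (if ν < za * sigTilde lam σ θ / Real.sqrt n then 1 else 0)
  else if θ ≤ ν + za * sigTilde lam σ θ / Real.sqrt n then
    Phi (za * sigTilde lam σ θ / σ) - Phi (Real.sqrt n * (ν - θ) / σ)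
  else 1 - 2 * Phi (-(za * sigTilde lam σ θ / σ))

open Classical in
/-- The piecewise function CR_b(θ,ν); here `za` denotes the quantile z_{α/2}. -/
noncomputable def CRb (n : ℕ) (σ α za θ ν : ℝ) : ℝ :=
  if θ < |ν - za * σ / Real.sqrt n| then
    (Ps n σ θ ν - α) * (if ν < za * σ / Real.sqrt n then 1 else 0)
  else if θ ≤ ν + za * σ / Real.sqrt n then
    1 - α / 2 - Phi (Real.sqrt n * (ν - θ) / σ)
  else 1 - α

/-- CR₁(θ) = CR_a(θ, ν₀)/P_s(θ, ν₀) with ν₀ = √λ: the conditional coverage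
probability of the asymptotic-based confidence interval. -/
noncomputable def CR1 (n : ℕ) (σ lam za θ : ℝ) : ℝ :=
  CRa n σ lam za θ (Real.sqrt lam) / Ps n σ θ (Real.sqrt lam)

/-- CR(θ) = (CR_b(θ,ν₁) + CR_a(θ,ν₂) − CR_b(θ,ν₂))/P_s(θ,ν₁) with
ν₁ = z_{τ/2}σ/√n and ν₂ = √λ + z_{α/2}σ/√n: the conditional coverage probability
of the two-step confidence interval. Here `za` = z_{α/2} and `zt` = z_{τ/2}. -/
noncomputable def CRtwo (n : ℕ) (σ lam α za zt θ : ℝ) : ℝ :=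
  (CRb n σ α za θ (zt * σ / Real.sqrt n)
    + CRa n σ lam za θ (Real.sqrt lam + za * σ / Real.sqrt n)
    - CRb n σ α za θ (Real.sqrt lam + za * σ / Real.sqrt n))
  / Ps n σ θ (zt * σ / Real.sqrt n)

/-- Δ(θ) = CR(θ) − CR₁(θ). -/
noncomputable def Delta (n : ℕ) (σ lam α za zt θ : ℝ) : ℝ :=
  CRtwo n σ lam α za zt θ - CR1 n σ lam za θ

/-! ### Auxiliary lemmas about `Phi` -/

lemma Phi_eq_integral (x : ℝ) :
    Phi x = ∫ t in Set.Iic x, gaussianPDFReal 0 1 t := by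
  rw [Phi, gaussianReal_apply_eq_integral 0 one_ne_zero,
    ENNReal.toReal_ofReal]
  exact integral_nonneg fun t => gaussianPDFReal_nonneg 0 1 t

lemma Phi_strictMono : StrictMono Phi := by
  intro a b hab
  have hint : ∀ c : ℝ, IntegrableOn (gaussianPDFReal 0 1) (Set.Iic c) :=
    fun c => (integrable_gaussianPDFReal 0 1).integrableOn
  have key : Phi b - Phi a = ∫ t in a..b, gaussianPDFReal 0 1 t := by
    rw [Phi_eq_integral, Phi_eq_integral]
    exact intervalIntegral.integral_Iic_sub_Iic (hint a) (hint b)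
  have hpos : 0 < ∫ t in a..b, gaussianPDFReal 0 1 t := by
    apply intervalIntegral.intervalIntegral_pos_of_pos_on
    · exact (integrable_gaussianPDFReal 0 1).intervalIntegrable
    · exact fun x _ => gaussianPDFReal_pos 0 1 x one_ne_zero
    · exact hab
  linarith [key, hpos]

lemma Phi_mono : Monotone Phi := Phi_strictMono.monotone

lemma Phi_add_Phi_neg (x : ℝ) : Phi x + Phi (-x) = 1 := by
  have heven : ∀ t : ℝ, gaussianPDFReal 0 1 (-t) = gaussianPDFReal 0 1 t := by
    intro t
    simp [gaussianPDFReal, neg_sq]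
  have h1 : Phi (-x) = ∫ t in Set.Ioi x, gaussianPDFReal 0 1 t := by
    rw [Phi_eq_integral]
    have := integral_comp_neg_Iic (-x) (gaussianPDFReal 0 1)
    rw [neg_neg] at this
    rw [← this]
    exact integral_congr_ae (Filter.Eventually.of_forall fun t => (heven t).symm)
  rw [Phi_eq_integral, h1]
  rw [intervalIntegral.integral_Iic_add_Ioi (integrable_gaussianPDFReal 0 1).integrableOn
    (integrable_gaussianPDFReal 0 1).integrableOn]
  exact integral_gaussianPDFReal_eq_one 0 one_ne_zero

lemma Phi_zero : Phi 0 = 1/2 := by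
  have := Phi_add_Phi_neg 0
  rw [neg_zero] at this
  linarith

lemma Phi_nonneg (x : ℝ) : 0 ≤ Phi x := ENNReal.toReal_nonneg

lemma Phi_pos (x : ℝ) : 0 < Phi x :=
  lt_of_le_of_lt (Phi_nonneg (x - 1)) (Phi_strictMono (by linarith))

/-- The core algebraic inequality. -/
lemma core_ineq {α β q B : ℝ} (hα0 : 0 < α) (hα1 : α < 1) (hαβ : α < β)
    (hβq : β ≤ q) (hq : q ≤ 1/2) (hB0 : 0 ≤ B) (hB : B ≤ α/2) :
    2/(1+α) - 2*(1-β) ≤ β/q - (α/2 + B)/(q + B) := by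
  have hβ0 : 0 < β := hα0.trans hαβ
  have hq0 : 0 < q := lt_of_lt_of_le hβ0 hβq
  have hqB : 0 < q + B := by linarith
  have h1α : (0:ℝ) < 1 + α := by linarith
  rw [← sub_nonneg]
  have key : β/q - (α/2 + B)/(q + B) - (2/(1+α) - 2*(1-β)) =
      (β*(q+B)*(1+α) - (α/2+B)*q*(1+α) - (2 - 2*(1-β)*(1+α))*(q*(q+B))) /
        (q*(q+B)*(1+α)) := by
    field_simp
  rw [key]
  apply div_nonneg _ (by positivity)
  have h2 : (0:ℝ) ≤ 1/2 - q := by linarith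
  have h3 : 0 ≤ 2*β*(q+B)*(1/2+B) - (α/2+B)*q := by
    nlinarith [mul_nonneg hβ0.le (mul_nonneg hq0.le hB0), mul_nonneg hβ0.le hB0,
      mul_nonneg hβ0.le (mul_nonneg hB0 hB0),
      mul_nonneg hq0.le (by linarith : (0:ℝ) ≤ β - α/2 - B)]
  have h4 : (0:ℝ) ≤ (1-α)*(α/2-B) := mul_nonneg (by linarith) (by linarith)
  have h5 : (0:ℝ) < 1/2 + B := by linarith
  nlinarith [mul_nonneg (mul_nonneg h2 h1α.le) h3,
    mul_nonneg (mul_nonneg hq0.le hqB.le) h4]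

set_option maxHeartbeats 2000000 in
/-- Theorem 1, part (b): under (C1), (C2) and
z_{α/2}σ/√n < √λ < (z_{α/2} + z_{τ/2})σ/√n, for every θ ∈ [c₁, ν₀] (ν₀ = √λ) we have
Δ(θ) ≥ 2/(1 + α) − 2Φ(z_{α/2}/2), and this lower bound is strictly positive. -/
theorem theorem1_part_b (n : ℕ) (hn : 1 ≤ n) (σ lam α τ za zt : ℝ)
    (hσ : 0 < σ) (hlam : 0 < lam)
    (hα : α ∈ Set.Ioo (0:ℝ) 1) (hτ : τ ∈ Set.Ioo (0:ℝ) 1)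
    (hza : Phi (-za) = α / 2) (hzt : Phi (-zt) = τ / 2)
    (hC1 : α ≤ τ) (hC2 : τ < 2 * Phi (-(za / 2)) - α)
    (hlamLB : za * σ / Real.sqrt n < Real.sqrt lam)
    (hlamUB : Real.sqrt lam < (za + zt) * σ / Real.sqrt n)
    (c₁ : ℝ) (hc₁pos : 0 < c₁)
    (hc₁ : c₁ = Real.sqrt lam - za * sigTilde lam σ c₁ / Real.sqrt n) :
    (∀ θ ∈ Set.Icc c₁ (Real.sqrt lam),
      2 / (1 + α) - 2 * Phi (za / 2) ≤ Delta n σ lam α za zt θ) ∧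
    0 < 2 / (1 + α) - 2 * Phi (za / 2) := by
  obtain ⟨hα0, hα1⟩ := hα
  obtain ⟨hτ0, hτ1⟩ := hτ
  have hn0 : (0:ℝ) < (n:ℝ) := by exact_mod_cast Nat.lt_of_lt_of_le Nat.zero_lt_one hn
  have hsqn : 0 < Real.sqrt (n:ℝ) := Real.sqrt_pos.2 hn0
  set sqn := Real.sqrt (n:ℝ) with hsqndef
  have hsl : 0 < Real.sqrt lam := Real.sqrt_pos.2 hlam
  set sl := Real.sqrt lam with hsldef
  have hsl2 : sl^2 = lam := Real.sq_sqrt hlam.le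
  set β := Phi (-(za/2)) with hβdef
  have hαβ : α < β := by linarith only [hC1, hC2]
  have hβpos : 0 < β := Phi_pos _
  have hσ' : σ ≠ 0 := hσ.ne'
  have hsqn' : sqn ≠ 0 := hsqn.ne'
  have hza0 : 0 < za := by
    by_contra h
    push_neg at h
    have h2 := Phi_mono (by linarith : (0:ℝ) ≤ -za)
    rw [Phi_zero, hza] at h2
    linarith only [h2, hα1]
  have hztza : zt ≤ za := by
    by_contra h
    push_neg at h
    have h2 := Phi_strictMono (by linarith : -zt < -za)
    rw [hza, hzt] at h2
    linarith only [h2, hC1]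
  have hzt2 : za/2 < zt := by
    by_contra h
    push_neg at h
    have h2 := Phi_mono (by linarith : -(za/2) ≤ -zt)
    rw [hzt, ← hβdef] at h2
    linarith only [h2, hC2, hα0]
  have hPhiza : Phi za = 1 - α/2 := by
    have h2 := Phi_add_Phi_neg za
    rw [hza] at h2
    linarith only [h2]
  have hPhiza2 : Phi (za/2) = 1 - β := by
    have h2 := Phi_add_Phi_neg (za/2)
    rw [← hβdef] at h2
    linarith only [h2]
  have hposσsqn : 0 < za*σ/sqn := by positivity
  constructor
  swap
  · -- positivity of the bound
    rw [hPhiza2]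
    have h1α : (0:ℝ) < 1 + α := by linarith
    have h2 : 2*(1-β)*(1+α) < 2 := by
      nlinarith only [hαβ, hα0, hβpos, hα1]
    have h3 : 2*(1-β) < 2/(1+α) := (lt_div_iff₀ h1α).2 h2
    linarith only [h3]
  intro θ hθmem
  obtain ⟨hθl, hθr⟩ := hθmem
  have hθ0 : 0 < θ := lt_of_lt_of_le hc₁pos hθl
  -- sigTilde facts
  have hstθ : sigTilde lam σ θ = (1 + lam/θ^2)⁻¹ * σ := if_neg hθ0.ne'
  have hstc : sigTilde lam σ c₁ = (1 + lam/c₁^2)⁻¹ * σ := if_neg hc₁pos.ne'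
  have hSt_pos : 0 < sigTilde lam σ θ := by rw [hstθ]; positivity
  have hSc_pos : 0 < sigTilde lam σ c₁ := by rw [hstc]; positivity
  have hc₁sl : c₁ ≤ sl := by
    have h0 : 0 ≤ za * sigTilde lam σ c₁ / sqn := by positivity
    linarith only [h0, hc₁]
  have half_bound : ∀ t : ℝ, 0 < t → t ≤ sl → sigTilde lam σ t ≤ σ/2 := by
    intro t ht htsl
    rw [show sigTilde lam σ t = (1 + lam/t^2)⁻¹ * σ from if_neg ht.ne']
    have htsq : t^2 ≤ lam := by
      have h0 : t*t ≤ sl*sl := mul_le_mul htsl htsl ht.le hsl.le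
      nlinarith only [h0, hsl2]
    have h1 : 1 ≤ lam/t^2 := (one_le_div (by positivity)).2 htsq
    have h2 : (1 + lam/t^2)⁻¹ ≤ ((2:ℝ))⁻¹ :=
      inv_anti₀ (by norm_num) (by linarith only [h1])
    have h3 := mul_le_mul_of_nonneg_right h2 hσ.le
    calc (1 + lam/t^2)⁻¹ * σ ≤ (2:ℝ)⁻¹ * σ := h3
      _ = σ/2 := by ring
  have hSt_le : sigTilde lam σ θ ≤ σ/2 := half_bound θ hθ0 hθr
  have hSc_le : sigTilde lam σ c₁ ≤ σ/2 := half_bound c₁ hc₁pos hc₁sl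
  have hScSt : sigTilde lam σ c₁ ≤ sigTilde lam σ θ := by
    rw [hstθ, hstc]
    have hsq : c₁^2 ≤ θ^2 := by
      have h0 : c₁*c₁ ≤ θ*θ := mul_le_mul hθl hθl hc₁pos.le hθ0.le
      nlinarith only [h0]
    have h1 : lam/θ^2 ≤ lam/c₁^2 := by
      rw [div_le_div_iff₀ (by positivity) (by positivity)]
      exact mul_le_mul_of_nonneg_left hsq hlam.le
    have h2 : (1 + lam/c₁^2)⁻¹ ≤ (1 + lam/θ^2)⁻¹ :=
      inv_anti₀ (by positivity) (by linarith)
    exact mul_le_mul_of_nonneg_right h2 hσ.le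
  -- half products
  have hhalf_t : za * sigTilde lam σ θ / sqn ≤ (za*σ/sqn)/2 := by
    have h1 : za * sigTilde lam σ θ ≤ za * (σ/2) :=
      mul_le_mul_of_nonneg_left hSt_le hza0.le
    calc za * sigTilde lam σ θ / sqn ≤ za * (σ/2) / sqn :=
          (div_le_div_iff_of_pos_right hsqn).2 h1
      _ = (za*σ/sqn)/2 := by ring
  have hhalf_c : za * sigTilde lam σ c₁ / sqn ≤ (za*σ/sqn)/2 := by
    have h1 : za * sigTilde lam σ c₁ ≤ za * (σ/2) :=
      mul_le_mul_of_nonneg_left hSc_le hza0.le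
    calc za * sigTilde lam σ c₁ / sqn ≤ za * (σ/2) / sqn :=
          (div_le_div_iff_of_pos_right hsqn).2 h1
      _ = (za*σ/sqn)/2 := by ring
  have hmono_div : za * sigTilde lam σ c₁ / sqn ≤ za * sigTilde lam σ θ / sqn :=
    (div_le_div_iff_of_pos_right hsqn).2 (mul_le_mul_of_nonneg_left hScSt hza0.le)
  have hθSt : sl - za * sigTilde lam σ θ / sqn ≤ θ := by
    linarith only [hc₁, hθl, hmono_div]
  -- branch computations
  have hCRa0 : CRa n σ lam za θ sl =
      Phi (za * sigTilde lam σ θ / σ) - Phi (sqn*(sl-θ)/σ) := by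
    have ha : 0 ≤ sl - za * sigTilde lam σ θ / sqn := by
      linarith only [hhalf_t, hlamLB, hposσsqn]
    have h1 : ¬ (θ < |sl - za * sigTilde lam σ θ / sqn|) := by
      rw [abs_of_nonneg ha]
      exact not_lt.2 hθSt
    have h2 : θ ≤ sl + za * sigTilde lam σ θ / sqn := by
      have h0 : 0 ≤ za * sigTilde lam σ θ / sqn := by positivity
      linarith only [h0, hθr]
    unfold CRa
    rw [if_neg h1, if_pos h2]
  have hCRa2 : CRa n σ lam za θ (sl + za*σ/sqn) = 0 := by
    have h1 : θ < |sl + za*σ/sqn - za * sigTilde lam σ θ / sqn| := by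
      have h0 : θ < sl + za*σ/sqn - za * sigTilde lam σ θ / sqn := by
        linarith only [hθr, hhalf_t, hposσsqn]
      exact lt_of_lt_of_le h0 (le_abs_self _)
    have h2 : ¬ (sl + za*σ/sqn < za * sigTilde lam σ θ / sqn) := by
      push_neg
      linarith only [hhalf_t, hposσsqn, hsl]
    unfold CRa
    rw [if_pos h1, if_neg h2, mul_zero]
  have hCRb2 : CRb n σ α za θ (sl + za*σ/sqn) = 0 := by
    rcases hθr.lt_or_eq with hlt | heq
    · have h1 : θ < |sl + za*σ/sqn - za*σ/sqn| := by
        rw [show sl + za*σ/sqn - za*σ/sqn = sl by ring, abs_of_nonneg hsl.le]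
        exact hlt
      have h2 : ¬ (sl + za*σ/sqn < za*σ/sqn) := by push_neg; linarith only [hsl]
      unfold CRb
      rw [if_pos h1, if_neg h2, mul_zero]
    · have h1 : ¬ (θ < |sl + za*σ/sqn - za*σ/sqn|) := by
        rw [show sl + za*σ/sqn - za*σ/sqn = sl by ring, abs_of_nonneg hsl.le]
        push_neg
        exact heq.ge
      have h2 : θ ≤ sl + za*σ/sqn + za*σ/sqn := by linarith only [hθr, hposσsqn]
      have harg : sqn * (sl + za*σ/sqn - θ) / σ = za := by
        rw [heq]
        field_simp
        ring
      unfold CRb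
      rw [if_neg h1, if_pos h2, harg, hPhiza]
      ring
  have hCRb1 : CRb n σ α za θ (zt*σ/sqn) = Phi (sqn*θ/σ - zt) - α/2 := by
    have habs : |zt*σ/sqn - za*σ/sqn| = (za-zt)*σ/sqn := by
      rw [abs_of_nonpos]
      · ring
      · have h0 : zt*σ ≤ za*σ := mul_le_mul_of_nonneg_right hztza hσ.le
        have h2 : zt*σ/sqn ≤ za*σ/sqn := (div_le_div_iff_of_pos_right hsqn).2 h0
        linarith only [h2]
    have hBle : (za-zt)*σ/sqn ≤ (za*σ/sqn)/2 := by
      have h1 : (za-zt)*σ ≤ (za/2)*σ := mul_le_mul_of_nonneg_right (by linarith) hσ.le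
      calc (za-zt)*σ/sqn ≤ (za/2)*σ/sqn := (div_le_div_iff_of_pos_right hsqn).2 h1
        _ = (za*σ/sqn)/2 := by ring
    have h1 : ¬ (θ < |zt*σ/sqn - za*σ/sqn|) := by
      rw [habs]
      push_neg
      linarith only [hc₁, hθl, hhalf_c, hlamLB, hBle]
    have h2 : θ ≤ zt*σ/sqn + za*σ/sqn := by
      have heq2 : (za+zt)*σ/sqn = zt*σ/sqn + za*σ/sqn := by ring
      linarith only [hθr, hlamUB, heq2]
    have harg : sqn * (zt*σ/sqn - θ) / σ = -(sqn*θ/σ - zt) := by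
      field_simp
      ring
    have hflip := Phi_add_Phi_neg (sqn*θ/σ - zt)
    unfold CRb
    rw [if_neg h1, if_pos h2, harg]
    linarith only [hflip]
  -- denominators
  have hPs1 : Ps n σ θ (zt*σ/sqn) = Phi (sqn*θ/σ - zt) + Phi (-(sqn*θ/σ) - zt) := by
    unfold Ps
    rw [show sqn * (θ - zt*σ/sqn) / σ = sqn*θ/σ - zt by field_simp,
      show sqn * (-θ - zt*σ/sqn) / σ = -(sqn*θ/σ) - zt by field_simp]
  have hPs0 : Ps n σ θ sl = Phi (-(sqn*(sl-θ)/σ)) + Phi (sqn*(-θ-sl)/σ) := by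
    unfold Ps
    rw [show sqn * (θ - sl) / σ = -(sqn*(sl-θ)/σ) by ring]
  -- scalar inequalities
  have hc1x : sqn*c₁/σ = sqn*sl/σ - za*(sigTilde lam σ c₁)/σ := by
    nth_rewrite 1 [hc₁]
    field_simp
  have hScσ : za * (sigTilde lam σ c₁)/σ ≤ za/2 := by
    rw [div_le_iff₀ hσ]
    nlinarith only [mul_le_mul_of_nonneg_left hSc_le hza0.le]
  have hStσ : za * (sigTilde lam σ θ)/σ ≤ za/2 := by
    rw [div_le_iff₀ hσ]
    nlinarith only [mul_le_mul_of_nonneg_left hSt_le hza0.le]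
  have hS : za < sqn*sl/σ := by
    rw [div_lt_iff₀ hsqn] at hlamLB
    rw [lt_div_iff₀ hσ]
    linarith only [hlamLB]
  have hX : za/2 < sqn*θ/σ := by
    have h1 : sqn*c₁/σ ≤ sqn*θ/σ :=
      (div_le_div_iff_of_pos_right hσ).2 (mul_le_mul_of_nonneg_left hθl hsqn.le)
    linarith only [hc1x, hScσ, hS, h1]
  have hV0 : 0 ≤ sqn*(sl-θ)/σ :=
    div_nonneg (mul_nonneg hsqn.le (by linarith)) hσ.le
  have hVr : sqn*(sl-θ)/σ ≤ za * sigTilde lam σ θ / σ := by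
    have h1 : sqn*(sl-θ) ≤ sqn*(za * sigTilde lam σ θ / sqn) := by
      apply mul_le_mul_of_nonneg_left _ hsqn.le
      linarith only [hθSt]
    have h2 : sqn*(za * sigTilde lam σ θ / sqn) = za * sigTilde lam σ θ := by
      field_simp
    calc sqn*(sl-θ)/σ ≤ sqn*(za * sigTilde lam σ θ / sqn)/σ :=
          (div_le_div_iff_of_pos_right hσ).2 h1
      _ = za * sigTilde lam σ θ / σ := by rw [h2]
  have hVhalf : sqn*(sl-θ)/σ ≤ za/2 := le_trans hVr hStσ
  -- Phi-level inequalities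
  have hq_ge : β ≤ Phi (-(sqn*(sl-θ)/σ)) := Phi_mono (by linarith only [hVhalf])
  have hq_le : Phi (-(sqn*(sl-θ)/σ)) ≤ 1/2 := by
    have h0 := Phi_mono (by linarith only [hV0] : -(sqn*(sl-θ)/σ) ≤ 0)
    rw [Phi_zero] at h0
    exact h0
  have hB_le : Phi (-(sqn*θ/σ) - zt) ≤ α/2 := by
    have h0 := Phi_mono (by linarith only [hX, hzt2] : -(sqn*θ/σ) - zt ≤ -za)
    rw [hza] at h0
    exact h0
  have hB0 : 0 ≤ Phi (-(sqn*θ/σ) - zt) := (Phi_pos _).le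
  have hsum : sqn*θ/σ + sqn*(sl-θ)/σ = sqn*sl/σ := by ring
  have hUq : Phi (-(sqn*(sl-θ)/σ)) ≤ Phi (sqn*θ/σ - zt) :=
    Phi_mono (by linarith only [hsum, hS, hztza])
  have hRub : Phi (za * sigTilde lam σ θ / σ) ≤ 1 - β := by
    rw [← hPhiza2]
    exact Phi_mono hStσ
  have hVq : Phi (sqn*(sl-θ)/σ) = 1 - Phi (-(sqn*(sl-θ)/σ)) := by
    linarith only [Phi_add_Phi_neg (sqn*(sl-θ)/σ)]
  have hnum0 : 0 ≤ Phi (za * sigTilde lam σ θ / σ) - Phi (sqn*(sl-θ)/σ) := by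
    have h0 := Phi_mono hVr
    linarith only [h0]
  have hnum1 : Phi (za * sigTilde lam σ θ / σ) - Phi (sqn*(sl-θ)/σ) ≤
      Phi (-(sqn*(sl-θ)/σ)) - β := by
    linarith only [hRub, hVq]
  have hT0 : 0 < Phi (sqn*(-θ-sl)/σ) := Phi_pos _
  have hq0 : 0 < Phi (-(sqn*(sl-θ)/σ)) := Phi_pos _
  have hU0 : 0 < Phi (sqn*θ/σ - zt) := Phi_pos _
  -- assembly
  rw [Delta, CRtwo, CR1, ← hsldef, ← hsqndef, hCRb1, hCRa2, hCRb2, hCRa0, hPs1, hPs0,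
    hPhiza2, add_zero, sub_zero]
  set U := Phi (sqn*θ/σ - zt) with hUdef
  set Bv := Phi (-(sqn*θ/σ) - zt) with hBvdef
  set q := Phi (-(sqn*(sl-θ)/σ)) with hqdef
  set R := Phi (za * sigTilde lam σ θ / σ) with hRdef
  set Vv := Phi (sqn*(sl-θ)/σ) with hVvdef
  set T := Phi (sqn*(-θ-sl)/σ) with hTdef
  have step1 : (R - Vv)/(q + T) ≤ (q - β)/q :=
    div_le_div₀ (by linarith only [hq_ge]) hnum1 hq0 (by linarith only [hT0])
  have step2 : (α/2 + Bv)/(U + Bv) ≤ (α/2 + Bv)/(q + Bv) :=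
    div_le_div₀ (by linarith only [hα0, hB0]) le_rfl (by linarith only [hq0, hB0])
      (by linarith only [hUq])
  have step3 : (U - α/2)/(U + Bv) = 1 - (α/2 + Bv)/(U + Bv) := by
    field_simp
    ring
  have step4 : (q - β)/q = 1 - β/q := by
    field_simp
  have core := core_ineq hα0 hα1 hαβ hq_ge hq_le hB0 hB_le
  linarith only [step1, step2, step3, step4, core]
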